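/- Let (X,d) be a compact metric space, f : X → X continuous, and Λ ⊆ X a closed set. Suppose Λ is internally chain transitive, f has h-shadowing on Λ, and f is open on a neighbourhood of Λ. Then Λ is dynamically indecomposable. -/

import Mathlib

def InternallyChainTransitive {X : Type*} [MetricSpace X] (f : X → X) (Λ : Set X) : Prop :=
  ∀ x ∈ Λ, ∀ y ∈ Λ, ∀ ε : ℝ, 0 < ε → ∃ m : ℕ, 1 ≤ m ∧ ∃ σ : ℕ → X,
    σ 0 = x ∧ σ m = y ∧ (∀ i ≤ m, σ i ∈ Λ) ∧ ∀ i < m, dist (f (σ i)) (σ (i + 1)) < ε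

def HShadowingOn {X : Type*} [MetricSpace X] (f : X → X) (Λ : Set X) : Prop :=
  ∀ ε : ℝ, 0 < ε → ∃ δ : ℝ, 0 < δ ∧ ∀ (m : ℕ) (σ : ℕ → X),
    (∀ i ≤ m, σ i ∈ Λ) → (∀ i < m, dist (f (σ i)) (σ (i + 1)) < δ) →
    ∃ y : X, (∀ i < m, dist (f^[i] y) (σ i) < ε) ∧ f^[m] y = σ m

def DynamicallyIndecomposable {X : Type*} [MetricSpace X] (f : X → X) (Λ : Set X) : Prop :=
  ∀ ε : ℝ, 0 < ε → ∀ x ∈ Λ, ∀ y ∈ Λ, ∀ U V : Set X,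
    IsOpen U → IsOpen V → x ∈ U → y ∈ V →
    ∃ m : ℕ, 0 < m ∧ ∃ J : ℕ → Set X,
      (∀ i ≤ m, J i = closure (interior (J i))) ∧
      x ∈ interior (J 0) ∧ J 0 ⊆ U ∧
      (∀ i < m, J (i + 1) ⊆ f '' (J i)) ∧
      (∀ i ≤ m, J i ⊆ Metric.thickening ε Λ) ∧
      y ∈ interior (J m) ∧ J m ⊆ V


open Metric Set Function

lemma rc_closure_open {X : Type*} [TopologicalSpace X] {O : Set X} (hO : IsOpen O) :
    closure O = closure (interior (closure O)) :=
  subset_antisymm (closure_mono (hO.subset_interior_iff.mpr subset_closure))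
    ((closure_mono interior_subset).trans (by rw [closure_closure]))

lemma image_closure_eq {X : Type*} [MetricSpace X] [CompactSpace X] {f : X → X}
    (hf : Continuous f) (A : Set X) : f '' closure A = closure (f '' A) :=
  subset_antisymm (image_closure_subset_closure_image hf)
    (closure_minimal (Set.image_mono subset_closure)
      ((isClosed_closure.isCompact.image hf).isClosed))

lemma image_open_of_subset {X : Type*} [TopologicalSpace X] {f : X → X} {W O : Set X}
    (hmap : ∀ x ∈ W, ∀ U ∈ nhds x, f x ∈ interior (f '' U))
    (hO : IsOpen O) (hOW : O ⊆ W) : IsOpen (f '' O) := by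
  rw [← subset_interior_iff_isOpen]
  rintro _ ⟨z, hz, rfl⟩
  exact hmap z (hOW hz) O (hO.mem_nhds hz)

lemma exists_unif_radius {X : Type*} [MetricSpace X] [CompactSpace X] {f : X → X}
    (hf : Continuous f) {ε : ℝ} (hε : 0 < ε) (m : ℕ) :
    ∃ r : ℝ, 0 < r ∧ r ≤ ε ∧ ∀ i ≤ m, ∀ z w : X, dist z w < r →
      dist (f^[i] z) (f^[i] w) < ε := by
  induction m with
  | zero =>
    exact ⟨ε, hε, le_refl ε, by
      intro i hi z w h; interval_cases i; simpa using h⟩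
  | succ n ih =>
    obtain ⟨r, hr, hrε, hrall⟩ := ih
    have hc : UniformContinuous (f^[n+1]) :=
      CompactSpace.uniformContinuous_of_continuous (hf.iterate (n+1))
    obtain ⟨r', hr', hr'p⟩ := Metric.uniformContinuous_iff.mp hc ε hε
    refine ⟨min r r', lt_min hr hr', (min_le_left _ _).trans hrε, ?_⟩
    intro i hi z w h
    rcases Nat.lt_succ_iff_lt_or_eq.mp (Nat.lt_succ_of_le hi) with hi' | rfl
    · exact hrall i (Nat.lt_succ_iff.mp hi') z w (h.trans_le (min_le_left _ _))
    · exact hr'p (h.trans_le (min_le_right _ _))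

theorem ict_hShadowing_open_implies_dynIndec' {X : Type*} [MetricSpace X] [CompactSpace X]
    (f : X → X) (hf : Continuous f) (Λ : Set X) (hΛc : IsClosed Λ)
    (hict : ∀ x ∈ Λ, ∀ y ∈ Λ, ∀ ε : ℝ, 0 < ε → ∃ m : ℕ, 1 ≤ m ∧ ∃ σ : ℕ → X,
      σ 0 = x ∧ σ m = y ∧ (∀ i ≤ m, σ i ∈ Λ) ∧ ∀ i < m, dist (f (σ i)) (σ (i + 1)) < ε)
    (hshad : ∀ ε : ℝ, 0 < ε → ∃ δ : ℝ, 0 < δ ∧ ∀ (m : ℕ) (σ : ℕ → X),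
      (∀ i ≤ m, σ i ∈ Λ) → (∀ i < m, dist (f (σ i)) (σ (i + 1)) < δ) →
      ∃ y : X, (∀ i < m, dist (f^[i] y) (σ i) < ε) ∧ f^[m] y = σ m)
    (hopen : ∃ W : Set X, IsOpen W ∧ Λ ⊆ W ∧
      ∀ x ∈ W, ∀ U ∈ nhds x, f x ∈ interior (f '' U)) :
    ∀ ε : ℝ, 0 < ε → ∀ x ∈ Λ, ∀ y ∈ Λ, ∀ U V : Set X,
    IsOpen U → IsOpen V → x ∈ U → y ∈ V →
    ∃ m : ℕ, 0 < m ∧ ∃ J : ℕ → Set X,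
      (∀ i ≤ m, J i = closure (interior (J i))) ∧
      x ∈ interior (J 0) ∧ J 0 ⊆ U ∧
      (∀ i < m, J (i + 1) ⊆ f '' (J i)) ∧
      (∀ i ≤ m, J i ⊆ Metric.thickening ε Λ) ∧
      y ∈ interior (J m) ∧ J m ⊆ V := by
  intro ε hε x hx y hy U V hU hV hxU hyV
  obtain ⟨W, hWopen, hΛW, hWmap⟩ := hopen
  obtain ⟨η, hη, hηW⟩ := (hΛc.isCompact).exists_thickening_subset_open hWopen hΛW
  obtain ⟨ε0x, hε0x, hballU⟩ := Metric.isOpen_iff.mp hU x hxU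
  obtain ⟨ε0y, hε0y, hballV⟩ := Metric.isOpen_iff.mp hV y hyV
  set M := min (min ε0x ε0y) (min ε η) with hMdef
  have hM : 0 < M := lt_min (lt_min hε0x hε0y) (lt_min hε hη)
  set ε' := M / 4 with hε'def
  have hε'pos : 0 < ε' := by positivity
  have hMx : M ≤ ε0x := (min_le_left _ _).trans (min_le_left _ _)
  have hMy : M ≤ ε0y := (min_le_left _ _).trans (min_le_right _ _)
  have hMε : M ≤ ε := (min_le_right _ _).trans (min_le_left _ _)
  have hMη : M ≤ η := (min_le_right _ _).trans (min_le_right _ _)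
  obtain ⟨δ, hδ, hδshad⟩ := hshad ε' hε'pos
  obtain ⟨m, hm1, σ, hσ0, hσm, hσΛ, hσjump⟩ := hict x hx y hy δ hδ
  obtain ⟨w, hwsh, hwm⟩ := hδshad m σ hσΛ hσjump
  obtain ⟨r, hr, hrε', hrall⟩ := exists_unif_radius hf hε'pos m
  have hm0 : m ≠ 0 := by omega
  set O := ball w r with hOdef
  -- distance of iterates of w to the pseudo-orbit
  have hdist : ∀ i ≤ m, dist (f^[i] w) (σ i) ≤ ε' := by
    intro i hi
    rcases hi.lt_or_eq with h | rfl
    · exact (hwsh i h).le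
    · rw [hwm]; simp [hε'pos.le]
  -- images of O are close to iterates of w
  have himg : ∀ i ≤ m, f^[i] '' O ⊆ ball (f^[i] w) ε' := by
    rintro i hi _ ⟨z, hz, rfl⟩
    exact hrall i hi z w (mem_ball.mp hz)
  -- images of O are inside W
  have hsubW : ∀ i ≤ m, f^[i] '' O ⊆ W := by
    intro i hi z hz
    apply hηW
    rw [Metric.mem_thickening_iff]
    refine ⟨σ i, hσΛ i hi, ?_⟩
    have h1 := himg i hi hz
    rw [mem_ball] at h1
    have h2 := hdist i hi
    calc dist z (σ i) ≤ dist z (f^[i] w) + dist (f^[i] w) (σ i) := dist_triangle _ _ _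
      _ < ε' + ε' := by linarith
      _ ≤ η := by rw [hε'def]; linarith
  -- images of O are open
  have hopenimg : ∀ i, i ≤ m → IsOpen (f^[i] '' O) := by
    intro i
    induction i with
    | zero => intro _; simpa [hOdef] using (Metric.isOpen_ball : IsOpen (ball w r))
    | succ n ih =>
      intro hi
      have hO' := ih (Nat.le_of_succ_le hi)
      have heq : f^[n+1] '' O = f '' (f^[n] '' O) := by
        rw [Function.iterate_succ', Set.image_comp]
      rw [heq]
      exact image_open_of_subset hWmap hO' (hsubW n (Nat.le_of_succ_le hi))
  -- closure of images inside thickening ε Λ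
  have hclos : ∀ i ≤ m, closure (f^[i] '' O) ⊆ thickening ε Λ := by
    intro i hi z hz
    have h1 : z ∈ closedBall (f^[i] w) ε' :=
      closure_minimal ((himg i hi).trans ball_subset_closedBall)
        Metric.isClosed_closedBall hz
    rw [mem_closedBall] at h1
    rw [Metric.mem_thickening_iff]
    refine ⟨σ i, hσΛ i hi, ?_⟩
    have h2 := hdist i hi
    calc dist z (σ i) ≤ dist z (f^[i] w) + dist (f^[i] w) (σ i) := dist_triangle _ _ _
      _ ≤ ε' + ε' := by linarith
      _ < ε := by rw [hε'def]; linarith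
  set J : ℕ → Set X :=
    fun i => if i = 0 then closure (ball w r) ∪ closure (ball x r)
             else closure (f^[i] '' O) with hJdef
  have hJ0 : J 0 = closure (ball w r) ∪ closure (ball x r) := if_pos rfl
  have hJpos : ∀ i, i ≠ 0 → J i = closure (f^[i] '' O) := fun i hi => if_neg hi
  have hdwx : dist w x ≤ ε' := by
    have := hdist 0 (Nat.zero_le m); simpa [hσ0] using this
  refine ⟨m, hm1, J, ?_, ?_, ?_, ?_, ?_, ?_, ?_⟩
  -- regular closedness
  · intro i hi
    rcases Nat.eq_zero_or_pos i with rfl | hipos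
    · have h0 : J 0 = closure (ball w r ∪ ball x r) := by rw [hJ0, closure_union]
      rw [h0]; exact rc_closure_open (isOpen_ball.union isOpen_ball)
    · rw [hJpos i (by omega)]
      exact rc_closure_open (hopenimg i hi)
  -- x ∈ interior (J 0)
  · have hsub : ball x r ⊆ J 0 := by
      rw [hJ0]; exact subset_closure.trans subset_union_right
    exact interior_maximal hsub isOpen_ball (mem_ball_self hr)
  -- J 0 ⊆ U
  · rw [hJ0]
    rintro z (hz | hz)
    · have h1 : dist z w ≤ r :=
        mem_closedBall.mp (closure_ball_subset_closedBall hz)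
      apply hballU
      rw [mem_ball]
      calc dist z x ≤ dist z w + dist w x := dist_triangle _ _ _
        _ ≤ r + ε' := by linarith
        _ ≤ ε' + ε' := by linarith
        _ < ε0x := by rw [hε'def]; linarith
    · have h1 : dist z x ≤ r :=
        mem_closedBall.mp (closure_ball_subset_closedBall hz)
      apply hballU
      rw [mem_ball]
      calc dist z x ≤ r := h1
        _ ≤ ε' := hrε'
        _ < ε0x := by rw [hε'def]; linarith
  -- chain condition
  · intro i hi
    have heq : f^[i+1] '' O = f '' (f^[i] '' O) := by
      rw [Function.iterate_succ', Set.image_comp]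
    have hstep : J (i+1) = f '' closure (f^[i] '' O) := by
      rw [hJpos (i+1) (by omega), heq, image_closure_eq hf]
    rw [hstep]
    apply Set.image_mono
    rcases Nat.eq_zero_or_pos i with rfl | hipos
    · rw [hJ0]
      simp only [Function.iterate_zero, Set.image_id]; exact (subset_union_left :
        closure (ball w r) ⊆ closure (ball w r) ∪ closure (ball x r))
    · rw [hJpos i (by omega)]
  -- thickening
  · intro i hi
    rcases Nat.eq_zero_or_pos i with rfl | hipos
    · rw [hJ0]
      rintro z (hz | hz)
      · have hzO : z ∈ closure (f^[0] '' O) := by simpa [hOdef] using hz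
        exact hclos 0 (Nat.zero_le m) hzO
      · have h1 : dist z x ≤ r :=
          mem_closedBall.mp (closure_ball_subset_closedBall hz)
        rw [Metric.mem_thickening_iff]
        exact ⟨x, hx, by
          calc dist z x ≤ r := h1
            _ ≤ ε' := hrε'
            _ < ε := by rw [hε'def]; linarith⟩
    · rw [hJpos i (by omega)]
      exact hclos i hi
  -- y ∈ interior (J m)
  · have hyO : y ∈ f^[m] '' O := ⟨w, mem_ball_self hr, by rw [hwm, hσm]⟩
    have hsub : f^[m] '' O ⊆ J m := by
      rw [hJpos m hm0]; exact subset_closure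
    exact interior_maximal hsub (hopenimg m le_rfl) hyO
  -- J m ⊆ V
  · rw [hJpos m hm0]
    intro z hz
    have h1 : z ∈ closedBall (f^[m] w) ε' :=
      closure_minimal ((himg m le_rfl).trans ball_subset_closedBall)
        Metric.isClosed_closedBall hz
    rw [mem_closedBall, hwm, hσm] at h1
    apply hballV
    rw [mem_ball]
    calc dist z y ≤ ε' := h1
      _ < ε0y := by rw [hε'def]; linarith


theorem ict_hShadowing_open_implies_dynIndec {X : Type*} [MetricSpace X] [CompactSpace X]
    (f : X → X) (hf : Continuous f) (Λ : Set X) (hΛc : IsClosed Λ)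
    (hict : InternallyChainTransitive f Λ)
    (hshad : HShadowingOn f Λ)
    (hopen : ∃ W : Set X, IsOpen W ∧ Λ ⊆ W ∧
      ∀ x ∈ W, ∀ U ∈ nhds x, f x ∈ interior (f '' U)) :
    DynamicallyIndecomposable f Λ := by
  exact ict_hShadowing_open_implies_dynIndec' f hf Λ hΛc hict hshad hopen
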